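/- For integers u ≥ 1, r₀ ≥ 0 and n with 2u + r₀ ≤ n, one has Σ_{p=1}^{u} binom(r₀+p,r₀)·binom(n−r₀−p−1,n−2u−r₀)·(p/u)·binom(2u−p−1,u−1) = ((r₀+1)/(n+1))·binom(n+1,u)·binom(n−r₀−u−1,u−1). -/

import Mathlib

open Finset Nat

lemma chooseR (b c : ℕ) : (((b+c).choose b : ℕ) : ℝ) = (b+c)! / ((b)! * (c)!) := by
  rw [Nat.cast_choose ℝ (Nat.le_add_right b c), Nat.add_sub_cancel_left]

lemma factR (n k : ℕ) (h : n = k+1) : ((n ! : ℕ) : ℝ) = (n : ℝ) * (k)! := by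
  subst h; rw [Nat.factorial_succ]; push_cast; ring

lemma factne (n : ℕ) : ((n ! : ℕ) : ℝ) ≠ 0 := by
  exact_mod_cast Nat.factorial_ne_zero n

lemma hs1 (v : ℕ) : ∑ q ∈ range (v+1), (2*v-q).choose v = (2*v+1).choose (v+1) := by
  calc ∑ q ∈ range (v+1), (2*v-q).choose v
      = ∑ q ∈ range (v+1), (v+(v+1-1-q)).choose v := by
        refine sum_congr rfl fun q hq => ?_
        have := mem_range.1 hq; congr 1; omega
    _ = ∑ j ∈ range (v+1), (v+j).choose v :=
        Finset.sum_range_reflect (fun j => (v+j).choose v) (v+1)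
    _ = ∑ m ∈ Icc v (2*v), m.choose v := by
        rw [← Finset.Ico_add_one_right_eq_Icc, Finset.sum_Ico_eq_sum_range]
        rw [show 2*v+1-v = v+1 by omega]
    _ = (2*v+1).choose (v+1) := Nat.sum_Icc_choose _ _

lemma hs2 (v : ℕ) : ∑ q ∈ range (v+1), (2*v-q).choose (v+1) = (2*v+1).choose (v+2) := by
  calc ∑ q ∈ range (v+1), (2*v-q).choose (v+1)
      = ∑ q ∈ range (v+1), (v+(v+1-1-q)).choose (v+1) := by
        refine sum_congr rfl fun q hq => ?_
        have := mem_range.1 hq; congr 1; omega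
    _ = ∑ j ∈ range (v+1), (v+j).choose (v+1) :=
        Finset.sum_range_reflect (fun j => (v+j).choose (v+1)) (v+1)
    _ = ∑ m ∈ Ico v (2*v+1), m.choose (v+1) := by
        rw [Finset.sum_Ico_eq_sum_range]
        rw [show 2*v+1-v = v+1 by omega]
    _ = (2*v+1).choose (v+2) := by
        rw [Finset.sum_eq_sum_Ico_succ_bot (by omega : v < 2*v+1)]
        rw [Nat.choose_eq_zero_of_lt (by omega), zero_add]
        have : ∑ k ∈ Ico (v+1) (2*v+1), k.choose (v+1)
            = ∑ m ∈ Icc (v+1) (2*v), m.choose (v+1) := by rw [← Finset.Ico_add_one_right_eq_Icc]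
        rw [this, Nat.sum_Icc_choose]

lemma base0 (v : ℕ) :
    ∑ q ∈ range (v+1), (((q:ℝ)+1)/((v:ℝ)+1)) * ((2*v-q).choose v : ℝ)
      = (1/(2*(v:ℝ)+3)) * ((2*v+3).choose (v+1) : ℝ) := by
  have hper : ∀ q ∈ range (v+1), (((q:ℝ)+1)/((v:ℝ)+1)) * ((2*v-q).choose v : ℝ)
      = ((2*v-q).choose v : ℝ) - ((2*v-q).choose (v+1) : ℝ) := by
    intro q hq
    have hq' := mem_range.1 hq
    have hnat : (2*v-q).choose (v+1) * (v+1) = (2*v-q).choose v * (v - q) := by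
      have h0 := Nat.choose_succ_right_eq (2*v-q) v
      rwa [show 2*v-q-v = v-q by omega] at h0
    have hc := congrArg (Nat.cast : ℕ → ℝ) hnat
    push_cast [Nat.cast_sub (by omega : q ≤ v)] at hc
    have hv1 : ((v:ℝ)+1) ≠ 0 := by positivity
    field_simp
    linear_combination hc
  rw [sum_congr rfl hper, Finset.sum_sub_distrib]
  rw [← Nat.cast_sum, ← Nat.cast_sum, hs1, hs2]
  match v with
  | 0 => norm_num
  | w+1 =>
    rw [show (2*(w+1)+1).choose (w+2) = ((w+2)+(w+1)).choose (w+2) by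
          rw [show 2*(w+1)+1 = (w+2)+(w+1) by ring],
        show (2*(w+1)+1).choose (w+3) = ((w+3)+w).choose (w+3) by
          rw [show 2*(w+1)+1 = (w+3)+w by ring],
        show (2*(w+1)+3).choose ((w+1)+1) = ((w+2)+(w+3)).choose (w+2) by
          rw [show 2*(w+1)+3 = (w+2)+(w+3) by ring]]
    rw [chooseR (w+2) (w+1), chooseR (w+3) w, chooseR (w+2) (w+3)]
    rw [show (w+2)+(w+1) = 2*w+3 by ring, show (w+3)+w = 2*w+3 by ring,
        show (w+2)+(w+3) = 2*w+5 by ring]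
    rw [factR (2*w+5) (2*w+4) (by omega), factR (2*w+4) (2*w+3) (by omega),
        factR (w+3) (w+2) (by omega), factR (w+2) (w+1) (by omega),
        factR (w+1) w (by omega)]
    push_cast
    have h1 : (2*((w:ℝ)+1)+3) ≠ 0 := by positivity
    field_simp [factne]
    ring

noncomputable def trm (v r0 m q : ℕ) : ℝ :=
  ((r0+q+1).choose r0 : ℝ) * ((2*v+m-q).choose m : ℝ) * (((q:ℝ)+1)/((v:ℝ)+1)) * ((2*v-q).choose v : ℝ)

noncomputable def Ght (v r0 m q : ℕ) : ℝ :=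
  (q:ℝ) * ((2*v+m+1-q : ℕ) : ℝ) * trm v r0 m q

noncomputable def Hht (v r0 q : ℕ) : ℝ :=
  (q:ℝ) * ((2*v+1-q : ℕ) : ℝ) * trm v r0 0 q

noncomputable def Sv (v r0 m : ℕ) : ℝ := ∑ q ∈ range (v+1), trm v r0 m q

noncomputable def rhs1 (v r0 m : ℕ) : ℝ :=
  (((r0:ℝ)+1)/(2*(v:ℝ)+(r0:ℝ)+(m:ℝ)+3)) * ((2*v+r0+m+3).choose (v+1) : ℝ) * ((v+m).choose v : ℝ)

lemma keyM (v r0 m q : ℕ) (hv : 1 ≤ v) (hq : q ≤ v) :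
    ((m:ℝ)+1)*((v:ℝ)+(r0:ℝ)+(m:ℝ)+3) * trm v r0 (m+1) q
      - (2*(v:ℝ)+(r0:ℝ)+(m:ℝ)+3)*((v:ℝ)+(m:ℝ)+1) * trm v r0 m q
    = Ght v r0 m (q+1) - Ght v r0 m q := by
  rcases Nat.lt_or_ge q v with hlt | hge
  · obtain ⟨i, rfl⟩ : ∃ i, v = q + i + 1 := ⟨v - q - 1, by omega⟩
    unfold Ght trm
    rw [show 2*(q+i+1)+(m+1)-q = (m+1)+(q+2*i+2) by omega,
        show 2*(q+i+1)+m-q = m+(q+2*i+2) by omega,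
        show 2*(q+i+1)+m-(q+1) = m+(q+2*i+1) by omega,
        show 2*(q+i+1)-q = (q+i+1)+(i+1) by omega,
        show 2*(q+i+1)-(q+1) = (q+i+1)+i by omega,
        show 2*(q+i+1)+m+1-q = q+2*i+m+3 by omega,
        show 2*(q+i+1)+m+1-(q+1) = q+2*i+m+2 by omega,
        show r0+q+1 = r0+(q+1) by ring,
        show r0+(q+1)+1 = r0+(q+2) by ring]
    rw [chooseR r0 (q+1), chooseR r0 (q+2), chooseR (m+1) (q+2*i+2),
        chooseR m (q+2*i+2), chooseR m (q+2*i+1),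
        chooseR (q+i+1) (i+1), chooseR (q+i+1) i]
    rw [show (m+1)+(q+2*i+2) = q+2*i+m+3 by ring,
        show m+(q+2*i+2) = q+2*i+m+2 by ring,
        show m+(q+2*i+1) = q+2*i+m+1 by ring,
        show (q+i+1)+(i+1) = q+2*i+2 by ring,
        show (q+i+1)+i = q+2*i+1 by ring]
    rw [factR (q+2*i+m+3) (q+2*i+m+2) (by omega), factR (q+2*i+m+2) (q+2*i+m+1) (by omega),
        factR (q+2*i+2) (q+2*i+1) (by omega), factR (r0+(q+2)) (r0+(q+1)) (by omega),
        factR (q+2) (q+1) (by omega), factR (i+1) i (by omega), factR (m+1) m (by omega)]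
    have n1 : ((q:ℝ)+(i:ℝ)+1)+1 ≠ 0 := by positivity
    push_cast
    field_simp [factne]
    ring
  · have hqe : q = v := le_antisymm hq hge
    subst hqe
    unfold Ght trm
    rw [show 2*q+(m+1)-q = (m+1)+q by omega,
        show 2*q+m-q = m+q by omega,
        show 2*q-q = q by omega,
        show 2*q+m+1-q = q+m+1 by omega,
        show 2*q-(q+1) = q-1 by omega,
        show r0+q+1 = r0+(q+1) by ring]
    rw [Nat.choose_self, Nat.choose_eq_zero_of_lt (by omega : q-1 < q)]
    rw [chooseR r0 (q+1), chooseR (m+1) q, chooseR m q]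
    rw [show (m+1)+q = q+m+1 by ring, show m+q = q+m by ring]
    rw [factR (q+m+1) (q+m) (by omega), factR (m+1) m (by omega)]
    have n1 : ((q:ℝ)+1) ≠ 0 := by positivity
    push_cast
    field_simp [factne]
    ring

lemma keyR (v r0 q : ℕ) (hv : 1 ≤ v) (hq : q ≤ v) :
    ((r0:ℝ)+1)*((v:ℝ)+(r0:ℝ)+3) * trm v (r0+1) 0 q
      - ((r0:ℝ)+2)*(2*(v:ℝ)+(r0:ℝ)+3) * trm v r0 0 q
    = Hht v r0 q - Hht v r0 (q+1) := by
  rcases Nat.lt_or_ge q v with hlt | hge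
  · obtain ⟨i, rfl⟩ : ∃ i, v = q + i + 1 := ⟨v - q - 1, by omega⟩
    unfold Hht trm
    rw [show 2*(q+i+1)+0-q = q+2*i+2 by omega,
        show 2*(q+i+1)+0-(q+1) = q+2*i+1 by omega,
        show 2*(q+i+1)-q = (q+i+1)+(i+1) by omega,
        show 2*(q+i+1)-(q+1) = (q+i+1)+i by omega,
        show 2*(q+i+1)+1-q = q+2*i+3 by omega,
        show 2*(q+i+1)+1-(q+1) = q+2*i+2 by omega,
        show r0+q+1 = r0+(q+1) by ring,
        show r0+(q+1)+1 = r0+(q+2) by ring,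
        show r0+1+q+1 = (r0+1)+(q+1) by ring]
    simp only [Nat.choose_zero_right]
    rw [chooseR r0 (q+1), chooseR r0 (q+2), chooseR (r0+1) (q+1),
        chooseR (q+i+1) (i+1), chooseR (q+i+1) i]
    rw [show (r0+1)+(q+1) = r0+(q+2) by ring,
        show (q+i+1)+(i+1) = q+2*i+2 by ring,
        show (q+i+1)+i = q+2*i+1 by ring]
    rw [factR (r0+(q+2)) (r0+(q+1)) (by omega), factR (q+2) (q+1) (by omega),
        factR (r0+1) r0 (by omega), factR (i+1) i (by omega),
        factR (q+2*i+2) (q+2*i+1) (by omega)]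
    push_cast
    field_simp [factne]
    ring
  · have hqe : q = v := le_antisymm hq hge
    subst hqe
    unfold Hht trm
    rw [show 2*q+0-q = q by omega,
        show 2*q+0-(q+1) = q-1 by omega,
        show 2*q-q = q by omega,
        show 2*q-(q+1) = q-1 by omega,
        show 2*q+1-q = q+1 by omega,
        show 2*q+1-(q+1) = q by omega,
        show r0+q+1 = r0+(q+1) by ring,
        show r0+1+q+1 = (r0+1)+(q+1) by ring]
    rw [Nat.choose_self, Nat.choose_eq_zero_of_lt (by omega : q-1 < q)]
    simp only [Nat.choose_zero_right]
    rw [chooseR r0 (q+1), chooseR (r0+1) (q+1)]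
    rw [show (r0+1)+(q+1) = r0+(q+2) by ring]
    rw [factR (r0+(q+2)) (r0+(q+1)) (by omega), factR (r0+1) r0 (by omega)]
    push_cast
    field_simp [factne]
    ring

lemma rhsrelM (v r0 m : ℕ) :
    (2*(v:ℝ)+(r0:ℝ)+(m:ℝ)+3)*((v:ℝ)+(m:ℝ)+1) * rhs1 v r0 m
      = ((m:ℝ)+1)*((v:ℝ)+(r0:ℝ)+(m:ℝ)+3) * rhs1 v r0 (m+1) := by
  unfold rhs1
  rw [show 2*v+r0+m+3 = (v+1)+(v+r0+m+2) by ring,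
      show 2*v+r0+(m+1)+3 = (v+1)+(v+r0+m+3) by ring]
  rw [chooseR (v+1) (v+r0+m+2), chooseR (v+1) (v+r0+m+3)]
  rw [chooseR v m, chooseR v (m+1)]
  rw [show (v+1)+(v+r0+m+2) = 2*v+r0+m+3 by ring,
      show (v+1)+(v+r0+m+3) = 2*v+r0+m+4 by ring]
  rw [factR (2*v+r0+m+4) (2*v+r0+m+3) (by omega), factR (v+(m+1)) (v+m) (by omega),
      factR (v+r0+m+3) (v+r0+m+2) (by omega), factR (m+1) m (by omega)]
  push_cast
  have h1 : 2*(v:ℝ)+(r0:ℝ)+(m:ℝ)+3 ≠ 0 := by positivity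
  have h2 : 2*(v:ℝ)+(r0:ℝ)+(m:ℝ)+1+3 ≠ 0 := by positivity
  field_simp [factne]
  ring

lemma rhsrelR (v r0 : ℕ) :
    ((r0:ℝ)+2)*(2*(v:ℝ)+(r0:ℝ)+3) * rhs1 v r0 0
      = ((r0:ℝ)+1)*((v:ℝ)+(r0:ℝ)+3) * rhs1 v (r0+1) 0 := by
  unfold rhs1
  rw [show 2*v+r0+0+3 = (v+1)+(v+r0+2) by ring,
      show 2*v+(r0+1)+0+3 = (v+1)+(v+r0+3) by ring]
  rw [chooseR (v+1) (v+r0+2), chooseR (v+1) (v+r0+3)]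
  rw [show (v+0).choose v = 1 by simp]
  rw [show (v+1)+(v+r0+2) = 2*v+r0+3 by ring,
      show (v+1)+(v+r0+3) = 2*v+r0+4 by ring]
  rw [factR (2*v+r0+4) (2*v+r0+3) (by omega), factR (v+r0+3) (v+r0+2) (by omega)]
  push_cast
  have h1 : 2*(v:ℝ)+(r0:ℝ)+3 ≠ 0 := by positivity
  have h2 : 2*(v:ℝ)+((r0:ℝ)+1)+3 ≠ 0 := by positivity
  field_simp [factne]
  ring

lemma GhtTop (v r0 m : ℕ) (hv : 1 ≤ v) : Ght v r0 m (v+1) = 0 := by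
  unfold Ght trm
  rw [Nat.choose_eq_zero_of_lt (show 2*v-(v+1) < v by omega)]
  simp

lemma HhtTop (v r0 : ℕ) (hv : 1 ≤ v) : Hht v r0 (v+1) = 0 := by
  unfold Hht trm
  rw [Nat.choose_eq_zero_of_lt (show 2*v-(v+1) < v by omega)]
  simp

lemma stepM (v r0 m : ℕ) (hv : 1 ≤ v) (IH : Sv v r0 m = rhs1 v r0 m) :
    Sv v r0 (m+1) = rhs1 v r0 (m+1) := by
  have tele : ∑ q ∈ range (v+1), (Ght v r0 m (q+1) - Ght v r0 m q)
      = Ght v r0 m (v+1) - Ght v r0 m 0 := Finset.sum_range_sub (Ght v r0 m) (v+1)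
  have h0 : Ght v r0 m 0 = 0 := by unfold Ght; simp
  have hsum : ((m:ℝ)+1)*((v:ℝ)+(r0:ℝ)+(m:ℝ)+3) * Sv v r0 (m+1)
      - (2*(v:ℝ)+(r0:ℝ)+(m:ℝ)+3)*((v:ℝ)+(m:ℝ)+1) * Sv v r0 m = 0 := by
    unfold Sv
    rw [Finset.mul_sum, Finset.mul_sum, ← Finset.sum_sub_distrib]
    rw [sum_congr rfl (fun q hq => keyM v r0 m q hv (Nat.lt_succ_iff.mp (mem_range.mp hq)))]
    rw [tele, GhtTop v r0 m hv, h0]; ring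
  have hne : ((m:ℝ)+1)*((v:ℝ)+(r0:ℝ)+(m:ℝ)+3) ≠ 0 := by positivity
  apply mul_left_cancel₀ hne
  rw [← rhsrelM v r0 m, ← IH]
  linarith [hsum]

lemma stepR (v r0 : ℕ) (hv : 1 ≤ v) (IH : Sv v r0 0 = rhs1 v r0 0) :
    Sv v (r0+1) 0 = rhs1 v (r0+1) 0 := by
  have tele : ∑ q ∈ range (v+1), (Hht v r0 q - Hht v r0 (q+1))
      = Hht v r0 0 - Hht v r0 (v+1) := Finset.sum_range_sub' (Hht v r0) (v+1)
  have h0 : Hht v r0 0 = 0 := by unfold Hht; simp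
  have hsum : ((r0:ℝ)+1)*((v:ℝ)+(r0:ℝ)+3) * Sv v (r0+1) 0
      - ((r0:ℝ)+2)*(2*(v:ℝ)+(r0:ℝ)+3) * Sv v r0 0 = 0 := by
    unfold Sv
    rw [Finset.mul_sum, Finset.mul_sum, ← Finset.sum_sub_distrib]
    rw [sum_congr rfl (fun q hq => keyR v r0 q hv (Nat.lt_succ_iff.mp (mem_range.mp hq)))]
    rw [tele, HhtTop v r0 hv, h0]; ring
  have hne : ((r0:ℝ)+1)*((v:ℝ)+(r0:ℝ)+3) ≠ 0 := by positivity
  apply mul_left_cancel₀ hne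
  rw [← rhsrelR v r0, ← IH]
  linarith [hsum]

lemma Tall (v r0 : ℕ) (hv : 1 ≤ v) : Sv v r0 0 = rhs1 v r0 0 := by
  induction r0 with
  | zero =>
    unfold Sv rhs1 trm
    have hper : ∀ q ∈ range (v+1),
        ((0+q+1).choose 0 : ℝ) * ((2*v+0-q).choose 0 : ℝ) * (((q:ℝ)+1)/((v:ℝ)+1))
          * ((2*v-q).choose v : ℝ)
        = (((q:ℝ)+1)/((v:ℝ)+1)) * ((2*v-q).choose v : ℝ) := by
      intro q hq
      rw [Nat.choose_zero_right, Nat.choose_zero_right]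
      push_cast; ring
    rw [sum_congr rfl hper, base0]
    rw [show 2*v+0+3 = 2*v+3 by ring, show (v+0).choose v = 1 by simp]
    push_cast; ring
  | succ r ih => exact stepR v r hv ih

lemma Sall (v r0 m : ℕ) (hv : 1 ≤ v) : Sv v r0 m = rhs1 v r0 m := by
  induction m with
  | zero => exact Tall v r0 hv
  | succ k ih => exact stepM v r0 k hv ih

theorem stmt8 (u r0 n : ℕ) (hu : 1 ≤ u) (h : 2 * u + r0 ≤ n) :
    ∑ p ∈ Finset.Icc 1 u,
        (Nat.choose (r0 + p) r0 : ℝ) * (Nat.choose (n - r0 - p - 1) (n - 2 * u - r0) : ℝ) *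
          ((p : ℝ) / (u : ℝ)) * (Nat.choose (2 * u - p - 1) (u - 1) : ℝ)
      = (((r0 : ℝ) + 1) / ((n : ℝ) + 1)) * (Nat.choose (n + 1) u : ℝ) *
          (Nat.choose (n - r0 - u - 1) (u - 1) : ℝ) := by
  obtain ⟨v, rfl⟩ : ∃ v, u = v+1 := ⟨u-1, by omega⟩
  obtain ⟨m, rfl⟩ : ∃ m, n = 2*(v+1)+r0+m := ⟨n-(2*(v+1)+r0), by omega⟩
  rcases Nat.eq_zero_or_pos v with hv0 | hv
  · subst hv0
    rw [Finset.Icc_self, Finset.sum_singleton]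
    have e1 : 2*(0+1)+r0+m - r0 - 1 - 1 = m := by omega
    have e3 : 2*(0+1) - 1 - 1 = 0 := by omega
    have e4 : (0:ℕ)+1-1 = 0 := by omega
    simp only [e1, e3, e4, Nat.choose_self, Nat.choose_zero_right,
      Nat.choose_succ_self_right]
    simp only [show ((0:ℕ)+1) = 1 from rfl, Nat.choose_one_right]
    push_cast
    have hne : ((2:ℝ)+(r0:ℝ)+(m:ℝ)+1) ≠ 0 := by positivity
    field_simp
    rw [show 2+r0+m-2-r0 = m by omega, Nat.choose_self]
    exact Nat.cast_one
  · have main := Sall v r0 m hv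
    unfold Sv at main
    rw [show Finset.Icc 1 (v+1) = Finset.Ico 1 (v+1+1) from (Finset.Ico_add_one_right_eq_Icc 1 (v+1)).symm]
    rw [Finset.sum_Ico_eq_sum_range]
    rw [show v+1+1-1 = v+1 by omega]
    have hper : ∀ q ∈ range (v+1),
        (Nat.choose (r0 + (1+q)) r0 : ℝ)
          * (Nat.choose (2*(v+1)+r0+m - r0 - (1+q) - 1) (2*(v+1)+r0+m - 2*(v+1) - r0) : ℝ)
          * (((1+q : ℕ) : ℝ) / ((v+1 : ℕ) : ℝ))
          * (Nat.choose (2*(v+1) - (1+q) - 1) ((v+1)-1) : ℝ)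
        = trm v r0 m q := by
      intro q hq
      have hq' := mem_range.1 hq
      unfold trm
      rw [show r0+(1+q) = r0+q+1 by ring,
          show 2*(v+1)+r0+m - r0 - (1+q) - 1 = 2*v+m-q by omega,
          show 2*(v+1)+r0+m - 2*(v+1) - r0 = m by omega,
          show 2*(v+1) - (1+q) - 1 = 2*v-q by omega,
          show (v+1)-1 = v by omega]
      push_cast
      ring
    rw [sum_congr rfl hper, main]
    unfold rhs1
    rw [show 2*(v+1)+r0+m+1 = 2*v+r0+m+3 by ring,
        show 2*(v+1)+r0+m - r0 - (v+1) - 1 = v+m by omega,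
        show (v+1)-1 = v by omega]
    push_cast
    ring
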